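/- Let n ≥ 3 and p ≡ 1 (mod 48·n!). Let z ∈ F_pˣ be an element of order 96k where n = 2k+1, and set x₁ = z^{1+8k}, y₁ = z^{16k}. Then: y₁ is a primitive 6th root of unity; x₁^{16k} = y₁^{1+8k}; the ratio x₁⁸/y₁⁴ = z⁸ is a primitive 12k-th root of unity; and for all 1 ≤ i ≤ 2k−2, (y₁⁸/x₁^{16})^i ∉ {y₁², y₁⁻²}. -/
import Mathlib


/-- Let `n = 2k+1 ≥ 3` and `p ≡ 1 (mod 48·n!)` be prime.  Let `z ∈ F_pˣ` have
order `96k`, and set `x₁ = z^{1+8k}`, `y₁ = z^{16k}`.  Then: `y₁` is a primitive 6th root of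
unity; `x₁^{16k} = y₁^{1+8k}`; the ratio `x₁⁸/y₁⁴ = z⁸` is a primitive `12k`-th root of unity;
and for all `1 ≤ i ≤ 2k-2`, `(y₁⁸/x₁^{16})^i ∉ {y₁², y₁⁻²}`. -/
theorem stmt_10 (n k p : ℕ) (hn : 3 ≤ n) (hnk : n = 2 * k + 1) (hp : p.Prime)
    (hcong : p % (48 * n.factorial) = 1)
    (z : (ZMod p)ˣ) (hz : orderOf z = 96 * k)
    (x₁ y₁ : (ZMod p)ˣ) (hx : x₁ = z ^ (1 + 8 * k)) (hy : y₁ = z ^ (16 * k)) :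
    orderOf y₁ = 6 ∧
    x₁ ^ (16 * k) = y₁ ^ (1 + 8 * k) ∧
    x₁ ^ 8 / y₁ ^ 4 = z ^ 8 ∧
    orderOf (x₁ ^ 8 / y₁ ^ 4) = 12 * k ∧
    ∀ i : ℕ, 1 ≤ i → i ≤ 2 * k - 2 →
      (y₁ ^ 8 / x₁ ^ 16) ^ i ≠ y₁ ^ 2 ∧ (y₁ ^ 8 / x₁ ^ 16) ^ i ≠ (y₁ ^ 2)⁻¹ := by
  haveI : Fact p.Prime := ⟨hp⟩
  have hk : 1 ≤ k := by omega
  have hz1 : z ^ (96 * k) = 1 := by rw [← hz]; exact pow_orderOf_eq_one z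
  have hdiv : x₁ ^ 8 / y₁ ^ 4 = z ^ 8 := by
    rw [hx, hy, ← pow_mul, ← pow_mul, div_eq_iff_eq_mul, ← pow_add,
      show 8 + 16 * k * 4 = (1 + 8 * k) * 8 by ring]
  have hord1 : orderOf y₁ = 6 := by
    rw [hy, orderOf_pow, hz, Nat.gcd_mul_right,
      show Nat.gcd 96 16 = 16 from rfl,
      show 96 * k = 6 * (16 * k) by ring, Nat.mul_div_cancel _ (by omega)]
  refine ⟨hord1, ?_, hdiv, ?_, ?_⟩
  · rw [hx, hy, ← pow_mul, ← pow_mul, mul_comm]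
  · rw [hdiv, orderOf_pow, hz,
      show Nat.gcd (96 * k) 8 = 8 from Nat.gcd_eq_right ⟨12 * k, by ring⟩,
      show 96 * k = 12 * k * 8 by ring, Nat.mul_div_cancel _ (by omega)]
  · intro i hi1 hi2
    have hratio : y₁ ^ 8 / x₁ ^ 16 = z ^ (96 * k - 16) := by
      rw [hx, hy, ← pow_mul, ← pow_mul, div_eq_iff_eq_mul, ← pow_add,
        show 96 * k - 16 + (1 + 8 * k) * 16 = 96 * k + 16 * k * 8 by omega,
        pow_add, hz1, one_mul]
    have hy2 : y₁ ^ 2 = z ^ (32 * k) := by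
      rw [hy, ← pow_mul, show 16 * k * 2 = 32 * k by ring]
    obtain ⟨m, hm⟩ : ∃ m, 96 * k = m + 16 := ⟨96 * k - 16, by omega⟩
    have hmi : ∀ c : ℕ, z ^ (m * i) = z ^ c → z ^ (c + 16 * i) = 1 := by
      intro c hc
      have h3 : z ^ (c + 16 * i) = z ^ (m * i + 16 * i) := by rw [pow_add, pow_add, hc]
      rw [h3, ← add_mul, ← hm, pow_mul, hz1, one_pow]
    constructor
    · intro h
      rw [hratio, hy2, ← pow_mul, show 96 * k - 16 = m by omega] at h
      have h2 := hmi _ h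
      have hd : 96 * k ∣ 32 * k + 16 * i := by
        rw [← hz]; exact orderOf_dvd_of_pow_eq_one h2
      have := Nat.eq_zero_of_dvd_of_lt hd (by omega)
      omega
    · intro h
      have hyinv : (y₁ ^ 2)⁻¹ = z ^ (64 * k) := by
        rw [inv_eq_iff_mul_eq_one, hy2, ← pow_add,
          show 32 * k + 64 * k = 96 * k by ring, hz1]
      rw [hratio, hyinv, ← pow_mul, show 96 * k - 16 = m by omega] at h
      have h2 := hmi _ h
      have hd : 96 * k ∣ 64 * k + 16 * i := by
        rw [← hz]; exact orderOf_dvd_of_pow_eq_one h2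
      have := Nat.eq_zero_of_dvd_of_lt hd (by omega)
      omega
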